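/- Let P be an orthogonal projection on a Hilbert space K and let W be an isometry on K whose cokernel has finite dimension M (i.e., dim ker W* = M < ∞). Then (W*PW)^{1/2} - W*PW is a Hilbert-Schmidt operator; in fact ‖(W*PW)^{1/2} - W*PW‖₂² ≤ M. -/

import Mathlib

open scoped ENNReal InnerProductSpace

/-- Squared Hilbert–Schmidt norm computed in a Hilbert basis (value in `ℝ≥0∞`). -/
noncomputable def hsNormSq {K : Type*} [NormedAddCommGroup K] [InnerProductSpace ℂ K]
    {ι : Type*} (b : HilbertBasis ι ℂ K) (T : K →L[ℂ] K) : ℝ≥0∞ :=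
  ∑' i, ENNReal.ofReal (‖T (b i)‖ ^ 2)

open RCLike in
/-- For a positive contraction `A` one has `‖A y‖² ≤ re ⟪y, A y⟫`. -/
private lemma aux_sq_le {K : Type*} [NormedAddCommGroup K] [InnerProductSpace ℂ K]
    [CompleteSpace K] (A : K →L[ℂ] K) (hA : A.IsPositive)
    (hc : ∀ z : K, ‖A z‖ ≤ ‖z‖) (y : K) :
    ‖A y‖ ^ 2 ≤ re ⟪y, A y⟫_ℂ := by
  have hsym : ∀ u v : K, ⟪A u, v⟫_ℂ = ⟪u, A v⟫_ℂ := fun u v => by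
    conv_lhs => rw [← hA.isSelfAdjoint.adjoint_eq]
    rw [ContinuousLinearMap.adjoint_inner_left]
  have h0 : (0:ℝ) ≤ re ⟪A (y - A y), y - A y⟫_ℂ := hA.re_inner_nonneg_left _
  have hexp : ⟪A (y - A y), y - A y⟫_ℂ
      = ⟪A y, y⟫_ℂ - ⟪A y, A y⟫_ℂ - ⟪A y, A y⟫_ℂ + ⟪A (A y), A y⟫_ℂ := by
    rw [map_sub, inner_sub_left, inner_sub_right, inner_sub_right, hsym (A y) y]
    ring
  rw [hexp] at h0
  simp only [map_add, map_sub] at h0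
  rw [inner_self_eq_norm_sq] at h0
  have hd : re ⟪A (A y), A y⟫_ℂ ≤ ‖A y‖ ^ 2 := by
    calc re ⟪A (A y), A y⟫_ℂ ≤ ‖A (A y)‖ * ‖A y‖ := re_inner_le_norm _ _
      _ ≤ ‖A y‖ * ‖A y‖ := by
          have := hc (A y); nlinarith [norm_nonneg (A y)]
      _ = ‖A y‖ ^ 2 := by ring
  rw [inner_re_symm]
  linarith

open RCLike ContinuousLinearMap in
theorem stmt1 {K : Type*} [NormedAddCommGroup K] [InnerProductSpace ℂ K] [CompleteSpace K]
    (P W sQ : K →L[ℂ] K)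
    (hP : IsSelfAdjoint P ∧ P * P = P)
    (hW : star W * W = 1)
    (M : ℕ)
    (hfin : FiniteDimensional ℂ (LinearMap.ker (star W).toLinearMap))
    (hM : Module.finrank ℂ (LinearMap.ker (star W).toLinearMap) = M)
    (hsQ : sQ.IsPositive ∧ sQ * sQ = star W * P * W)
    (ι : Type*) (b : HilbertBasis ι ℂ K) :
    hsNormSq b (sQ - star W * P * W) ≤ (M : ℝ≥0∞) := by
  classical
  obtain ⟨hPsa, hPidem⟩ := hP
  obtain ⟨hsQpos, hsQsq⟩ := hsQ
  set Q : K →L[ℂ] K := star W * P * W with hQdef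
  -- pointwise applications of the operator identities
  have hWW : ∀ z : K, (star W) (W z) = z := fun z => by
    simpa [ContinuousLinearMap.mul_apply] using congrArg (fun T : K →L[ℂ] K => T z) hW
  have hPP : ∀ z : K, P (P z) = P z := fun z => by
    simpa [ContinuousLinearMap.mul_apply] using congrArg (fun T : K →L[ℂ] K => T z) hPidem
  have hsQQ : ∀ z : K, sQ (sQ z) = Q z := fun z => by
    simpa [ContinuousLinearMap.mul_apply] using congrArg (fun T : K →L[ℂ] K => T z) hsQsq
  have hQapp : ∀ z : K, Q z = (star W) (P (W z)) := fun z => by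
    simp [hQdef, ContinuousLinearMap.mul_apply]
  -- adjoint moves
  have hPsym : ∀ u v : K, ⟪P u, v⟫_ℂ = ⟪u, P v⟫_ℂ := fun u v => by
    conv_lhs => rw [← hPsa.adjoint_eq]
    rw [ContinuousLinearMap.adjoint_inner_left]
  have hsQsym : ∀ u v : K, ⟪sQ u, v⟫_ℂ = ⟪u, sQ v⟫_ℂ := fun u v => by
    conv_lhs => rw [← hsQpos.isSelfAdjoint.adjoint_eq]
    rw [ContinuousLinearMap.adjoint_inner_left]
  have hWadj : ∀ u v : K, ⟪(star W) u, v⟫_ℂ = ⟪u, W v⟫_ℂ := fun u v => by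
    rw [ContinuousLinearMap.star_eq_adjoint, ContinuousLinearMap.adjoint_inner_left]
  have hWadj' : ∀ u v : K, ⟪u, (star W) v⟫_ℂ = ⟪W u, v⟫_ℂ := fun u v => by
    rw [ContinuousLinearMap.star_eq_adjoint, ContinuousLinearMap.adjoint_inner_right]
  -- norm estimates
  have hWiso : ∀ z : K, ‖W z‖ = ‖z‖ := by
    intro z
    have h1 : ⟪W z, W z⟫_ℂ = ⟪z, z⟫_ℂ := by rw [← hWadj' z (W z), hWW]
    have h2 : ‖W z‖ ^ 2 = ‖z‖ ^ 2 := by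
      rw [← inner_self_eq_norm_sq (𝕜 := ℂ), ← inner_self_eq_norm_sq (𝕜 := ℂ), h1]
    nlinarith [norm_nonneg (W z), norm_nonneg z]
  have hPc : ∀ z : K, ‖P z‖ ≤ ‖z‖ := by
    intro z
    have h1 : ‖P z‖ ^ 2 = re ⟪z, P z⟫_ℂ := by
      rw [← inner_self_eq_norm_sq (𝕜 := ℂ), hPsym z (P z), hPP z]
    have h2 := re_inner_le_norm (𝕜 := ℂ) z (P z)
    nlinarith [norm_nonneg (P z), norm_nonneg z]
  have hWdc : ∀ z : K, ‖(star W) z‖ ≤ ‖z‖ := by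
    intro z
    have h1 : ‖(star W) z‖ ^ 2 = re ⟪W ((star W) z), z⟫_ℂ := by
      rw [← inner_self_eq_norm_sq (𝕜 := ℂ), hWadj' ((star W) z) z]
    have h2 := re_inner_le_norm (𝕜 := ℂ) (W ((star W) z)) z
    rw [hWiso ((star W) z)] at h2
    nlinarith [norm_nonneg ((star W) z), norm_nonneg z]
  have hQc : ∀ z : K, ‖Q z‖ ≤ ‖z‖ := by
    intro z
    rw [hQapp]
    calc ‖(star W) (P (W z))‖ ≤ ‖P (W z)‖ := hWdc _
      _ ≤ ‖W z‖ := hPc _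
      _ = ‖z‖ := hWiso z
  have hsQc : ∀ z : K, ‖sQ z‖ ≤ ‖z‖ := by
    intro z
    have h1 : ‖sQ z‖ ^ 2 = re ⟪z, Q z⟫_ℂ := by
      rw [← inner_self_eq_norm_sq (𝕜 := ℂ), hsQsym z (sQ z), hsQQ z]
    have h2 := re_inner_le_norm (𝕜 := ℂ) z (Q z)
    have h3 := hQc z
    nlinarith [norm_nonneg (sQ z), norm_nonneg z, norm_nonneg (Q z)]
  -- finite-dimensional cokernel data
  set S : Submodule ℂ K := LinearMap.ker (star W).toLinearMap with hSdef
  haveI : FiniteDimensional ℂ S := hfin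
  set f : OrthonormalBasis (Fin (Module.finrank ℂ S)) ℂ S := stdOrthonormalBasis ℂ S with hf
  set g : Fin (Module.finrank ℂ S) → K := fun j => (star W) (P ((f j : K))) with hg
  -- the key pointwise estimate
  have key : ∀ x : K, ‖(sQ - Q) x‖ ^ 2 ≤ ∑ j, ‖⟪g j, x⟫_ℂ‖ ^ 2 := by
    intro x
    set p : K := P (W x) with hp
    set v : K := p - W ((star W) p) with hv
    have step1 : ‖(sQ - Q) x‖ ^ 2 ≤ re ⟪x, Q x⟫_ℂ - ‖Q x‖ ^ 2 := by
      have e1 : ‖(sQ - Q) x‖ ^ 2 = ‖sQ x‖ ^ 2 - 2 * re ⟪sQ x, Q x⟫_ℂ + ‖Q x‖ ^ 2 := by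
        rw [ContinuousLinearMap.sub_apply, norm_sub_sq (𝕜 := ℂ)]
      have e2 : ‖sQ x‖ ^ 2 = re ⟪x, Q x⟫_ℂ := by
        rw [← inner_self_eq_norm_sq (𝕜 := ℂ), hsQsym x (sQ x), hsQQ x]
      have e4 : ‖Q x‖ ^ 2 ≤ re ⟪sQ x, Q x⟫_ℂ := by
        have h := aux_sq_le sQ hsQpos hsQc (sQ x)
        rwa [hsQQ x] at h
      linarith
    have e5 : re ⟪x, Q x⟫_ℂ = ‖p‖ ^ 2 := by
      have h1 : ⟪x, Q x⟫_ℂ = ⟪p, p⟫_ℂ := by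
        calc ⟪x, Q x⟫_ℂ = ⟪W x, p⟫_ℂ := by rw [hQapp x, hWadj' x (P (W x))]
          _ = ⟪W x, P p⟫_ℂ := by conv_lhs => rw [hp, ← hPP (W x)]
          _ = ⟪p, p⟫_ℂ := by rw [← hPsym (W x) p, ← hp]
      rw [h1, inner_self_eq_norm_sq]
    have e6 : ‖Q x‖ ^ 2 = ‖(star W) p‖ ^ 2 := by rw [hQapp x, ← hp]
    have e7 : ‖v‖ ^ 2 = ‖p‖ ^ 2 - ‖(star W) p‖ ^ 2 := by
      rw [hv, norm_sub_sq (𝕜 := ℂ)]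
      have h1 : re ⟪p, W ((star W) p)⟫_ℂ = ‖(star W) p‖ ^ 2 := by
        rw [← hWadj p ((star W) p), inner_self_eq_norm_sq]
      rw [h1, hWiso ((star W) p)]
      ring
    have hvS : v ∈ S := by
      rw [hSdef, LinearMap.mem_ker]
      show (star W) v = 0
      rw [hv, map_sub, hWW ((star W) p), sub_self]
    have hinner : ∀ j, ⟪((f j : K)), v⟫_ℂ = ⟪g j, x⟫_ℂ := by
      intro j
      have hker : (star W) ((f j : K)) = 0 := (f j).2
      calc ⟪(f j : K), v⟫_ℂ
          = ⟪(f j : K), p⟫_ℂ - ⟪(f j : K), W ((star W) p)⟫_ℂ := by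
            rw [hv, inner_sub_right]
        _ = ⟪(f j : K), p⟫_ℂ := by
            rw [← hWadj (f j : K) ((star W) p), hker, inner_zero_left, sub_zero]
        _ = ⟪P (f j : K), W x⟫_ℂ := by rw [hp, hPsym]
        _ = ⟪g j, x⟫_ℂ := by rw [hg, ← hWadj (P (f j : K)) x]
    have e8 : ‖v‖ ^ 2 = ∑ j, ‖⟪g j, x⟫_ℂ‖ ^ 2 := by
      set vS : S := ⟨v, hvS⟩ with hvSdef
      have hnv : ‖vS‖ = ‖v‖ := rfl
      have hsum := f.sum_inner_mul_inner vS vS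
      calc ‖v‖ ^ 2 = re ⟪vS, vS⟫_ℂ := by rw [inner_self_eq_norm_sq, hnv]
        _ = re (∑ j, ⟪vS, f j⟫_ℂ * ⟪f j, vS⟫_ℂ) := by rw [hsum]
        _ = ∑ j, re (⟪vS, f j⟫_ℂ * ⟪f j, vS⟫_ℂ) := map_sum re _ _
        _ = ∑ j, ‖⟪g j, x⟫_ℂ‖ ^ 2 := by
            refine Finset.sum_congr rfl fun j _ => ?_
            rw [← inner_conj_symm vS (f j), RCLike.conj_mul, Submodule.coe_inner,
              hinner j]
            simp [← Complex.ofReal_pow]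
    calc ‖(sQ - Q) x‖ ^ 2 ≤ re ⟪x, Q x⟫_ℂ - ‖Q x‖ ^ 2 := step1
      _ = ‖v‖ ^ 2 := by rw [e5, e6, e7]
      _ = ∑ j, ‖⟪g j, x⟫_ℂ‖ ^ 2 := e8
  -- norm bound on the `g j`
  have hgle : ∀ j, ‖g j‖ ≤ 1 := by
    intro j
    have h1 : ‖(f j : K)‖ = 1 := by
      have := f.orthonormal.1 j
      rwa [← Submodule.norm_coe] at this
    calc ‖g j‖ ≤ ‖P (f j : K)‖ := hWdc _
      _ ≤ ‖(f j : K)‖ := hPc _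
      _ = 1 := h1
  -- Parseval for each `g j`
  have parseval : ∀ j, ∑' i, ENNReal.ofReal (‖⟪g j, b i⟫_ℂ‖ ^ 2)
      = ENNReal.ofReal (‖g j‖ ^ 2) := by
    intro j
    have hs := b.hasSum_inner_mul_inner (g j) (g j)
    have h1 := hs.mapL Complex.reCLM
    have h2 : ∀ i, Complex.reCLM (⟪g j, b i⟫_ℂ * ⟪b i, g j⟫_ℂ) = ‖⟪g j, b i⟫_ℂ‖ ^ 2 := by
      intro i
      rw [← inner_conj_symm (b i) (g j), RCLike.mul_conj]
      simp [← Complex.ofReal_pow]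
    have h3 : Complex.reCLM ⟪g j, g j⟫_ℂ = ‖g j‖ ^ 2 := by
      simpa using inner_self_eq_norm_sq (𝕜 := ℂ) (g j)
    have hs2 : HasSum (fun i => ‖⟪g j, b i⟫_ℂ‖ ^ 2) (‖g j‖ ^ 2) := by
      simpa [h2, h3, ← Complex.ofReal_pow] using h1
    rw [← ENNReal.ofReal_tsum_of_nonneg (fun i => sq_nonneg _) hs2.summable, hs2.tsum_eq]
  -- assemble
  show (∑' i, ENNReal.ofReal (‖(sQ - Q) (b i)‖ ^ 2)) ≤ (M : ℝ≥0∞)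
  calc (∑' i, ENNReal.ofReal (‖(sQ - Q) (b i)‖ ^ 2))
      ≤ ∑' i, ∑ j, ENNReal.ofReal (‖⟪g j, b i⟫_ℂ‖ ^ 2) := by
        refine ENNReal.tsum_le_tsum fun i => ?_
        rw [← ENNReal.ofReal_sum_of_nonneg (fun j _ => sq_nonneg _)]
        exact ENNReal.ofReal_le_ofReal (key (b i))
    _ = ∑ j, ∑' i, ENNReal.ofReal (‖⟪g j, b i⟫_ℂ‖ ^ 2) := Summable.tsum_finsetSum fun j _ => ENNReal.summable
    _ = ∑ j, ENNReal.ofReal (‖g j‖ ^ 2) := Finset.sum_congr rfl fun j _ => parseval j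
    _ ≤ ∑ _j : Fin (Module.finrank ℂ S), (1 : ℝ≥0∞) := by
        refine Finset.sum_le_sum fun j _ => ?_
        rw [← ENNReal.ofReal_one]
        exact ENNReal.ofReal_le_ofReal (pow_le_one₀ (norm_nonneg _) (hgle j))
    _ = (M : ℝ≥0∞) := by
        rw [Finset.sum_const, Finset.card_univ, Fintype.card_fin]
        simp [hM]
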